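/- Let μ be an equilibrium measure of F. Then μ has no atoms (μ({a}) = 0 for every a ∈ ℂ) and the support of μ is a perfect set, i.e. it has no isolated points. -/

import Mathlib

set_option maxHeartbeats 1000000

open MeasureTheory Polynomial Filter
open scoped ENNReal


/-- The Perron–Frobenius operator of the polynomial correspondence `F = f ∘ g⁻¹`:
`Λφ(z) = (deg f)⁻¹ Σ_w φ(g(w))`, the sum running over the roots `w` of `f - z`
counted with multiplicity. -/
noncomputable def Lam (f g : Polynomial ℂ) (φ : ℂ → ℝ) : ℂ → ℝ :=
  fun z => (f.natDegree : ℝ)⁻¹ * (((f - C z).roots).map (fun w => φ (g.eval w))).sum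

noncomputable def Complex.abs : AbsoluteValue ℂ ℝ :=
  IsAbsoluteValue.toAbsoluteValue (norm : ℂ → ℝ)

@[simp] lemma Complex.abs_apply' (z : ℂ) : Complex.abs z = ‖z‖ := rfl

lemma Complex.norm_eq_abs (z : ℂ) : ‖z‖ = Complex.abs z := rfl

lemma Complex.continuous_abs : Continuous Complex.abs := continuous_norm

namespace EqmAux

lemma ms_prod_swap (W V : Multiset ℂ) (F : ℂ → ℂ → ℂ) :
    (W.map (fun w => (V.map (fun v => F w v)).prod)).prod
      = (V.map (fun v => (W.map (fun w => F w v)).prod)).prod := by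
  induction W using Multiset.induction_on with
  | empty => simp
  | cons w W ih => simp [Multiset.prod_map_mul, ih]

lemma ms_sum_swap (W V : Multiset ℂ) (F : ℂ → ℂ → ℝ) :
    (W.map (fun w => (V.map (fun v => F w v)).sum)).sum
      = (V.map (fun v => (W.map (fun w => F w v)).sum)).sum := by
  induction W using Multiset.induction_on with
  | empty => simp
  | cons w W ih => simp [Multiset.sum_map_add, ih]

lemma ms_log_prod (m : Multiset ℝ) (h : ∀ x ∈ m, x ≠ 0) :
    Real.log m.prod = (m.map Real.log).sum := by
  induction m using Multiset.induction_on with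
  | empty => simp
  | cons x m ih =>
      have hx : x ≠ 0 := h x (Multiset.mem_cons_self _ _)
      have hm : ∀ y ∈ m, y ≠ 0 := fun y hy => h y (Multiset.mem_cons_of_mem hy)
      have hprod : m.prod ≠ 0 := by
        intro h0
        rcases Multiset.prod_eq_zero_iff.mp h0 with h0'
        exact hm 0 h0' rfl
      simp [Real.log_mul hx hprod, ih hm]

lemma sub_C_ne_zero {f : ℂ[X]} (hf : 0 < f.natDegree) (z : ℂ) : f - C z ≠ 0 := by
  intro h
  have h2 : (f - C z).natDegree = f.natDegree := natDegree_sub_C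
  rw [h, natDegree_zero] at h2
  omega

lemma leadingCoeff_sub_C {f : ℂ[X]} (hf : 0 < f.natDegree) (z : ℂ) :
    (f - C z).leadingCoeff = f.leadingCoeff := by
  have h0 : f.natDegree ≠ 0 := hf.ne'
  have h1 : (f - C z).leadingCoeff = (f - C z).coeff ((f - C z).natDegree) := rfl
  rw [h1, natDegree_sub_C, coeff_sub, coeff_C, if_neg h0, sub_zero, coeff_natDegree]

lemma card_roots_sub_C {f : ℂ[X]} (hf : 0 < f.natDegree) (z : ℂ) :
    Multiset.card (f - C z).roots = f.natDegree := by
  have h := (Polynomial.splits_iff_card_roots (f := f - C z)).mp (IsAlgClosed.splits _)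
  rw [h, natDegree_sub_C]

lemma mem_roots_sub_C {f : ℂ[X]} (hf : 0 < f.natDegree) {z w : ℂ} :
    w ∈ (f - C z).roots ↔ f.eval w = z := by
  rw [mem_roots', IsRoot.def, eval_sub, eval_C, sub_eq_zero]
  exact ⟨fun h => h.2, fun h => ⟨sub_C_ne_zero hf z, h⟩⟩

lemma eval_eq_prod_roots {f : ℂ[X]} (hf : 0 < f.natDegree) (z v : ℂ) :
    f.eval v - z = f.leadingCoeff * (((f - C z).roots).map (fun w => v - w)).prod := by
  have h := (IsAlgClosed.splits (f - C z)).eq_prod_roots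
  have h2 : (f - C z).eval v = f.eval v - z := by simp
  rw [← h2]
  conv_lhs => rw [h]
  rw [eval_mul, eval_C, eval_multiset_prod, Multiset.map_map, leadingCoeff_sub_C hf]
  simp [Function.comp]

lemma key_prod {f g : ℂ[X]} (hf : 0 < f.natDegree) (hg : 0 < g.natDegree) (z b : ℂ) :
    f.leadingCoeff ^ g.natDegree * (((f - C z).roots).map (fun w => g.eval w - b)).prod
      = g.leadingCoeff ^ f.natDegree * (-1 : ℂ) ^ (f.natDegree * g.natDegree)
        * (((g - C b).roots).map (fun v => f.eval v - z)).prod := by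
  set W := (f - C z).roots with hW
  set V := (g - C b).roots with hV
  have hcardW : Multiset.card W = f.natDegree := card_roots_sub_C hf z
  have hcardV : Multiset.card V = g.natDegree := card_roots_sub_C hg b
  have step1 : (W.map (fun w => g.eval w - b)).prod
      = g.leadingCoeff ^ f.natDegree * (W.map (fun w => (V.map (fun v => w - v)).prod)).prod := by
    have : ∀ w : ℂ, g.eval w - b = g.leadingCoeff * (V.map (fun v => w - v)).prod :=
      fun w => eval_eq_prod_roots hg b w
    calc (W.map (fun w => g.eval w - b)).prod
        = (W.map (fun w => g.leadingCoeff * (V.map (fun v => w - v)).prod)).prod := by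
          rw [Multiset.map_congr rfl (fun w _ => this w)]
      _ = (W.map (fun _ => g.leadingCoeff)).prod
            * (W.map (fun w => (V.map (fun v => w - v)).prod)).prod := Multiset.prod_map_mul
      _ = g.leadingCoeff ^ f.natDegree
            * (W.map (fun w => (V.map (fun v => w - v)).prod)).prod := by
          rw [Multiset.map_const', Multiset.prod_replicate, hcardW]
  have step2 : (W.map (fun w => (V.map (fun v => w - v)).prod)).prod
      = (V.map (fun v => (W.map (fun w => w - v)).prod)).prod := ms_prod_swap W V _
  have step3 : ∀ v : ℂ, (W.map (fun w => w - v)).prod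
      = (-1 : ℂ) ^ f.natDegree * (W.map (fun w => v - w)).prod := by
    intro v
    calc (W.map (fun w => w - v)).prod
        = (W.map (fun w => (-1 : ℂ) * (v - w))).prod := by
          rw [Multiset.map_congr rfl (fun w _ => show w - v = (-1 : ℂ) * (v - w) by ring)]
      _ = (W.map (fun _ => (-1 : ℂ))).prod * (W.map (fun w => v - w)).prod :=
          Multiset.prod_map_mul
      _ = (-1 : ℂ) ^ f.natDegree * (W.map (fun w => v - w)).prod := by
          rw [Multiset.map_const', Multiset.prod_replicate, hcardW]
  have step4 : ∀ v : ℂ, f.leadingCoeff * (W.map (fun w => v - w)).prod = f.eval v - z :=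
    fun v => (eval_eq_prod_roots hf z v).symm
  calc f.leadingCoeff ^ g.natDegree * (W.map (fun w => g.eval w - b)).prod
      = g.leadingCoeff ^ f.natDegree * (f.leadingCoeff ^ g.natDegree
          * (V.map (fun v => (W.map (fun w => w - v)).prod)).prod) := by
        rw [step1, step2]; ring
    _ = g.leadingCoeff ^ f.natDegree
          * (V.map (fun v => f.leadingCoeff * (W.map (fun w => w - v)).prod)).prod := by
        rw [Multiset.prod_map_mul, Multiset.map_const', Multiset.prod_replicate, hcardV]
    _ = g.leadingCoeff ^ f.natDegree
          * (V.map (fun v => (-1 : ℂ) ^ f.natDegree * (f.eval v - z))).prod := by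
        congr 1
        refine congrArg Multiset.prod (Multiset.map_congr rfl (fun v _ => ?_))
        rw [step3 v, ← step4 v]; ring
    _ = g.leadingCoeff ^ f.natDegree * (-1 : ℂ) ^ (f.natDegree * g.natDegree)
          * (V.map (fun v => f.eval v - z)).prod := by
        rw [Multiset.prod_map_mul, Multiset.map_const', Multiset.prod_replicate, hcardV,
          ← pow_mul]
        ring


lemma abs_ne_zero' {x : ℂ} (h : x ≠ 0) : Complex.abs x ≠ 0 := by
  simpa using h

lemma key_log {f g : ℂ[X]} (hf : 0 < f.natDegree) (hg : 0 < g.natDegree)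
    (hf0 : f ≠ 0) (hg0 : g ≠ 0) {z b : ℂ}
    (hzb : ∀ v ∈ (g - C b).roots, f.eval v ≠ z) :
    (((f - C z).roots).map (fun w => Real.log (Complex.abs (g.eval w - b)))).sum
      = ((f.natDegree : ℝ) * Real.log (Complex.abs g.leadingCoeff)
          - (g.natDegree : ℝ) * Real.log (Complex.abs f.leadingCoeff))
        + (((g - C b).roots).map (fun v => Real.log (Complex.abs (z - f.eval v)))).sum := by
  set W := (f - C z).roots with hW
  set V := (g - C b).roots with hV
  have hcf : Complex.abs f.leadingCoeff ≠ 0 := abs_ne_zero' (leadingCoeff_ne_zero.mpr hf0)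
  have hcg : Complex.abs g.leadingCoeff ≠ 0 := abs_ne_zero' (leadingCoeff_ne_zero.mpr hg0)
  -- absolute-value version of key_prod
  have habs : Complex.abs f.leadingCoeff ^ g.natDegree
        * (W.map (fun w => Complex.abs (g.eval w - b))).prod
      = Complex.abs g.leadingCoeff ^ f.natDegree
        * (V.map (fun v => Complex.abs (f.eval v - z))).prod := by
    have h := congrArg Complex.abs (key_prod hf hg z b)
    rw [map_mul, map_mul, map_mul, map_pow, map_pow, map_pow,
      map_multiset_prod, map_multiset_prod, Multiset.map_map, Multiset.map_map] at h
    simpa [Function.comp_def, map_neg_eq_map] using h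
  have hVne : ∀ x ∈ V.map (fun v => Complex.abs (f.eval v - z)), x ≠ 0 := by
    intro x hx
    rcases Multiset.mem_map.mp hx with ⟨v, hv, rfl⟩
    exact abs_ne_zero' (sub_ne_zero.mpr (hzb v hv))
  have hVprod : (V.map (fun v => Complex.abs (f.eval v - z))).prod ≠ 0 := by
    intro h0
    rcases Multiset.prod_eq_zero_iff.mp h0 with h0'
    exact hVne 0 h0' rfl
  have hWprod : (W.map (fun w => Complex.abs (g.eval w - b))).prod ≠ 0 := by
    intro h0
    apply hVprod
    have := habs
    rw [h0, mul_zero] at this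
    rcases mul_eq_zero.mp this.symm with h | h
    · exact absurd h (pow_ne_zero _ hcg)
    · exact h
  have hWne : ∀ x ∈ W.map (fun w => Complex.abs (g.eval w - b)), x ≠ 0 := by
    intro x hx h0
    exact hWprod (Multiset.prod_eq_zero (h0 ▸ hx))
  have hlog := congrArg Real.log habs
  rw [Real.log_mul (pow_ne_zero _ hcf) hWprod, Real.log_mul (pow_ne_zero _ hcg) hVprod,
    Real.log_pow, Real.log_pow, ms_log_prod _ hWne, ms_log_prod _ hVne,
    Multiset.map_map, Multiset.map_map] at hlog
  have habs_sub : ∀ v : ℂ, Complex.abs (f.eval v - z) = Complex.abs (z - f.eval v) :=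
    fun v => Complex.abs.map_sub _ _
  have hrw : (V.map (fun v => Real.log (Complex.abs (f.eval v - z)))).sum
      = (V.map (fun v => Real.log (Complex.abs (z - f.eval v)))).sum := by
    rw [Multiset.map_congr rfl (fun v _ => by rw [habs_sub v])]
  simp only [Function.comp] at hlog
  rw [hrw] at hlog
  linarith

lemma Lam_sub (f g : ℂ[X]) (φ ψ : ℂ → ℝ) : Lam f g (φ - ψ) = Lam f g φ - Lam f g ψ := by
  funext z
  simp only [Lam, Pi.sub_apply, Multiset.sum_map_sub, mul_sub]

lemma Lam_iter_sub (f g : ℂ[X]) (n : ℕ) (φ ψ : ℂ → ℝ) :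
    (Lam f g)^[n] (φ - ψ) = (Lam f g)^[n] φ - (Lam f g)^[n] ψ := by
  induction n with
  | zero => rfl
  | succ n ih =>
      rw [Function.iterate_succ_apply', Function.iterate_succ_apply',
        Function.iterate_succ_apply', ih, Lam_sub]

lemma Lam_iter_rho_zero (f g : ℂ[X]) (hf : 0 < f.natDegree) (R₀ : ℝ)
    (hR : ∀ w : ℂ, Complex.abs (f.eval w) ≤ R₀ → Complex.abs (g.eval w) ≤ R₀)
    (ρ : ℂ → ℝ) (hρ : ∀ x : ℂ, Complex.abs x ≤ R₀ → ρ x = 0) :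
    ∀ n (z : ℂ), Complex.abs z ≤ R₀ → (Lam f g)^[n] ρ z = 0 := by
  intro n
  induction n with
  | zero => exact fun z hz => hρ z hz
  | succ n ih =>
      intro z hz
      rw [Function.iterate_succ_apply']
      show (f.natDegree : ℝ)⁻¹ * (((f - C z).roots).map (fun w => (Lam f g)^[n] ρ (g.eval w))).sum = 0
      rw [Multiset.sum_eq_zero, mul_zero]
      intro x hx
      rcases Multiset.mem_map.mp hx with ⟨w, hw, rfl⟩
      have hfw : f.eval w = z := (mem_roots_sub_C hf).mp hw
      exact ih (g.eval w) (hR w (by rw [hfw]; exact hz))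

noncomputable def Bfam (g f : ℂ[X]) (a : ℂ) : ℕ → Multiset ℂ
  | 0 => {a}
  | n + 1 => (Bfam g f a n).bind fun b => ((g - C b).roots).map f.eval

lemma card_Bfam {f g : ℂ[X]} (hg : 0 < g.natDegree) (a : ℂ) :
    ∀ n, Multiset.card (Bfam g f a n) = g.natDegree ^ n := by
  intro n
  induction n with
  | zero => simp [Bfam]
  | succ n ih =>
      rw [Bfam, Multiset.card_bind]
      have h : ∀ b ∈ Bfam g f a n,
          (Multiset.card ∘ fun b => ((g - C b).roots).map f.eval) b = g.natDegree := by
        intro b _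
        simp [Function.comp, card_roots_sub_C hg]
      rw [Multiset.map_congr rfl h, Multiset.map_const', Multiset.sum_replicate, ih,
        smul_eq_mul, pow_succ]

noncomputable def cseq (γ : ℝ) (d k : ℕ) : ℕ → ℝ
  | 0 => 0
  | n + 1 => cseq γ d k n + ((d : ℝ) ^ (n + 1))⁻¹ * (k : ℝ) ^ n * γ

lemma main_claim {f g : ℂ[X]} (hf : 0 < f.natDegree) (hg : 0 < g.natDegree)
    (hf0 : f ≠ 0) (hg0 : g ≠ 0) (a : ℂ) (ψ : ℂ → ℝ)
    (hψ : ∀ x : ℂ, x ≠ a → Real.log (Complex.abs (x - a)) ≤ ψ x) :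
    ∀ n (z : ℂ), z ∉ Bfam g f a n →
      cseq ((f.natDegree : ℝ) * Real.log (Complex.abs g.leadingCoeff)
          - (g.natDegree : ℝ) * Real.log (Complex.abs f.leadingCoeff)) f.natDegree g.natDegree n
        + ((f.natDegree : ℝ) ^ n)⁻¹
          * ((Bfam g f a n).map (fun b => Real.log (Complex.abs (z - b)))).sum
        ≤ (Lam f g)^[n] ψ z := by
  set γ := (f.natDegree : ℝ) * Real.log (Complex.abs g.leadingCoeff)
      - (g.natDegree : ℝ) * Real.log (Complex.abs f.leadingCoeff) with hγ
  have hdR : (0 : ℝ) < (f.natDegree : ℝ) := by exact_mod_cast hf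
  intro n
  induction n with
  | zero =>
      intro z hz
      have hza : z ≠ a := by
        intro h; exact hz (by rw [h]; simp [Bfam])
      have : (Bfam g f a 0).map (fun b => Real.log (Complex.abs (z - b)))
          = {Real.log (Complex.abs (z - a))} := by simp [Bfam]
      rw [this]
      simpa [cseq] using hψ z hza
  | succ n ih =>
      intro z hz
      -- membership facts
      have h1 : ∀ w ∈ (f - C z).roots, g.eval w ∉ Bfam g f a n := by
        intro w hw hmem
        apply hz
        rw [show Bfam g f a (n+1) = (Bfam g f a n).bind fun b => ((g - C b).roots).map f.eval from rfl]
        rw [Multiset.mem_bind]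
        refine ⟨g.eval w, hmem, ?_⟩
        rw [Multiset.mem_map]
        exact ⟨w, (mem_roots_sub_C hg).mpr rfl, (mem_roots_sub_C hf).mp hw⟩
      have h2 : ∀ b ∈ Bfam g f a n, ∀ v ∈ (g - C b).roots, f.eval v ≠ z := by
        intro b hb v hv hvz
        apply hz
        rw [show Bfam g f a (n+1) = (Bfam g f a n).bind fun b => ((g - C b).roots).map f.eval from rfl]
        rw [Multiset.mem_bind]
        exact ⟨b, hb, Multiset.mem_map.mpr ⟨v, hv, hvz⟩⟩
      rw [Function.iterate_succ_apply']
      show _ ≤ (f.natDegree : ℝ)⁻¹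
        * (((f - C z).roots).map (fun w => (Lam f g)^[n] ψ (g.eval w))).sum
      -- lower bound each summand by the inductive hypothesis
      have hsum : (((f - C z).roots).map (fun w =>
            cseq γ f.natDegree g.natDegree n
              + ((f.natDegree : ℝ) ^ n)⁻¹
                * ((Bfam g f a n).map (fun b => Real.log (Complex.abs (g.eval w - b)))).sum)).sum
          ≤ (((f - C z).roots).map (fun w => (Lam f g)^[n] ψ (g.eval w))).sum := by
        apply Multiset.sum_map_le_sum_map
        intro w hw
        exact ih (g.eval w) (h1 w hw)
      -- compute the left sum exactly
      have hcardW : Multiset.card ((f - C z).roots) = f.natDegree := card_roots_sub_C hf z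
      have hkey : ∀ b ∈ Bfam g f a n,
          (((f - C z).roots).map (fun w => Real.log (Complex.abs (g.eval w - b)))).sum
            = γ + (((g - C b).roots).map (fun v => Real.log (Complex.abs (z - f.eval v)))).sum :=
        fun b hb => key_log hf hg hf0 hg0 (h2 b hb)
      have hcompute : (((f - C z).roots).map (fun w =>
            cseq γ f.natDegree g.natDegree n
              + ((f.natDegree : ℝ) ^ n)⁻¹
                * ((Bfam g f a n).map (fun b => Real.log (Complex.abs (g.eval w - b)))).sum)).sum
          = (f.natDegree : ℝ) * cseq γ f.natDegree g.natDegree n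
            + ((f.natDegree : ℝ) ^ n)⁻¹ * ((g.natDegree : ℝ) ^ n * γ
              + ((Bfam g f a (n+1)).map (fun b => Real.log (Complex.abs (z - b)))).sum) := by
        rw [Multiset.sum_map_add]
        congr 1
        · rw [Multiset.map_const', Multiset.sum_replicate, hcardW, nsmul_eq_mul]
        · rw [Multiset.sum_map_mul_left]
          congr 1
          rw [ms_sum_swap]
          rw [Multiset.map_congr rfl hkey]
          rw [Multiset.sum_map_add]
          congr 1
          · rw [Multiset.map_const', Multiset.sum_replicate, card_Bfam hg, nsmul_eq_mul]
            push_cast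
            ring
          · rw [show Bfam g f a (n+1) = (Bfam g f a n).bind fun b => ((g - C b).roots).map f.eval from rfl]
            rw [Multiset.map_bind, Multiset.sum_bind]
            congr 1
            refine Multiset.map_congr rfl (fun b _ => ?_)
            rw [Multiset.map_map]
            rfl
      rw [hcompute] at hsum
      have hfinal := mul_le_mul_of_nonneg_left hsum (le_of_lt (inv_pos.mpr hdR))
      refine le_trans (le_of_eq ?_) hfinal
      have hd0 : (f.natDegree : ℝ) ≠ 0 := ne_of_gt hdR
      have hdn0 : ((f.natDegree : ℝ) ^ n) ≠ 0 := pow_ne_zero _ hd0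
      show cseq γ f.natDegree g.natDegree (n+1)
          + ((f.natDegree : ℝ) ^ (n+1))⁻¹
            * ((Bfam g f a (n+1)).map (fun b => Real.log (Complex.abs (z - b)))).sum = _
      rw [show cseq γ f.natDegree g.natDegree (n+1)
          = cseq γ f.natDegree g.natDegree n
            + ((f.natDegree : ℝ) ^ (n + 1))⁻¹ * (g.natDegree : ℝ) ^ n * γ from rfl]
      field_simp
      ring


lemma cseq_ge (γ : ℝ) {d k : ℕ} (hd : 0 < d) (hkd : k < d) :
    ∀ n, -(|γ| / ((d : ℝ) * (1 - (k : ℝ) / (d : ℝ)))) ≤ cseq γ d k n := by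
  have hdR : (0 : ℝ) < (d : ℝ) := by exact_mod_cast hd
  set r : ℝ := (k : ℝ) / (d : ℝ) with hrdef
  have hr0 : 0 ≤ r := div_nonneg (Nat.cast_nonneg _) hdR.le
  have hr1 : r < 1 := by
    rw [hrdef, div_lt_one hdR]
    exact_mod_cast hkd
  set A : ℝ := |γ| / ((d : ℝ) * (1 - r)) with hAdef
  have hA0 : 0 ≤ A := div_nonneg (abs_nonneg _) (mul_nonneg hdR.le (by linarith))
  have h1r : (1 : ℝ) - r ≠ 0 := by linarith
  have hAr : A * (1 - r) = |γ| / (d : ℝ) := by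
    rw [hAdef, div_mul_eq_mul_div, mul_comm (d : ℝ) (1 - r), ← div_div, mul_div_assoc,
      div_self h1r, mul_one]
  have key : ∀ n, -A * (1 - r ^ n) ≤ cseq γ d k n := by
    intro n
    induction n with
    | zero => simp [cseq]
    | succ n ih =>
        have hterm : -(r ^ n * (|γ| / (d : ℝ))) ≤ ((d : ℝ) ^ (n + 1))⁻¹ * (k : ℝ) ^ n * γ := by
          have heq : ((d : ℝ) ^ (n + 1))⁻¹ * (k : ℝ) ^ n = r ^ n / (d : ℝ) := by
            rw [hrdef, div_pow, div_div, ← pow_succ, inv_mul_eq_div]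
          rw [heq]
          have hpos : 0 ≤ r ^ n / (d : ℝ) := div_nonneg (pow_nonneg hr0 n) hdR.le
          have := mul_le_mul_of_nonneg_left (neg_abs_le γ) hpos
          calc -(r ^ n * (|γ| / (d : ℝ))) = (r ^ n / (d : ℝ)) * (-|γ|) := by ring
            _ ≤ (r ^ n / (d : ℝ)) * γ := this
        have hident : -A * (1 - r ^ (n + 1)) = -A * (1 - r ^ n) - r ^ n * (A * (1 - r)) := by
          rw [pow_succ]; ring
        rw [show cseq γ d k (n + 1)
            = cseq γ d k n + ((d : ℝ) ^ (n + 1))⁻¹ * (k : ℝ) ^ n * γ from rfl]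
        rw [hident, hAr]
        have hrn : 0 ≤ r ^ n := pow_nonneg hr0 n
        linarith
  intro n
  calc -(|γ| / ((d : ℝ) * (1 - r))) = -A := rfl
    _ ≤ -A * (1 - r ^ n) := by
        have h1 : r ^ n ≤ 1 := pow_le_one₀ hr0 hr1.le
        have h2 : 0 ≤ r ^ n := pow_nonneg hr0 n
        nlinarith
    _ ≤ cseq γ d k n := key n

lemma eval_abs_le (p : ℂ[X]) {w : ℂ} (hw : 1 ≤ Complex.abs w) :
    Complex.abs (p.eval w)
      ≤ (∑ i ∈ Finset.range (p.natDegree + 1), Complex.abs (p.coeff i))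
        * Complex.abs w ^ p.natDegree := by
  rw [Polynomial.eval_eq_sum_range, Finset.sum_mul]
  refine le_trans (Complex.abs.sum_le _ _) (Finset.sum_le_sum fun i hi => ?_)
  rw [map_mul, map_pow]
  have hi' : i ≤ p.natDegree := Nat.lt_succ_iff.mp (Finset.mem_range.mp hi)
  exact mul_le_mul_of_nonneg_left (pow_le_pow_right₀ hw hi') (Complex.abs.nonneg _)

lemma exists_R0 {f g : ℂ[X]} (hf1 : 0 < f.natDegree) (hkd : g.natDegree < f.natDegree) :
    ∃ R₀ : ℝ, 1 ≤ R₀ ∧ ∀ w : ℂ, Complex.abs (f.eval w) ≤ R₀ → Complex.abs (g.eval w) ≤ R₀ := by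
  set d := f.natDegree with hd
  set cf := f.leadingCoeff with hcf
  set Cg : ℝ := ∑ i ∈ Finset.range (g.natDegree + 1), Complex.abs (g.coeff i) with hCg
  set C₁ : ℝ := ∑ i ∈ Finset.range (f.eraseLead.natDegree + 1), Complex.abs (f.eraseLead.coeff i)
    with hC₁
  have hCg0 : 0 ≤ Cg := Finset.sum_nonneg fun i _ => Complex.abs.nonneg _
  have hC₁0 : 0 ≤ C₁ := Finset.sum_nonneg fun i _ => Complex.abs.nonneg _
  have hcf0 : 0 < Complex.abs cf := by
    rw [hcf, AbsoluteValue.pos_iff]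
    exact leadingCoeff_ne_zero.mpr (fun h => by rw [h] at hd; simp [hd] at hf1)
  set ρ : ℝ := max 1 ((C₁ + Cg + 1) / Complex.abs cf) with hρdef
  have hρ1 : 1 ≤ ρ := le_max_left _ _
  -- eventual domination
  have hdom : ∀ w : ℂ, ρ ≤ Complex.abs w → Complex.abs (g.eval w) ≤ Complex.abs (f.eval w) := by
    intro w hw
    have hw1 : 1 ≤ Complex.abs w := le_trans hρ1 hw
    have hgb : Complex.abs (g.eval w) ≤ Cg * Complex.abs w ^ g.natDegree := eval_abs_le g hw1
    have helb : Complex.abs (f.eraseLead.eval w) ≤ C₁ * Complex.abs w ^ f.eraseLead.natDegree :=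
      eval_abs_le f.eraseLead hw1
    have hel_deg : Complex.abs w ^ f.eraseLead.natDegree ≤ Complex.abs w ^ (d - 1) :=
      pow_le_pow_right₀ hw1 (le_trans (Polynomial.eraseLead_natDegree_le f) (by omega))
    have hg_deg : Complex.abs w ^ g.natDegree ≤ Complex.abs w ^ (d - 1) :=
      pow_le_pow_right₀ hw1 (by omega)
    have hfsplit : f.eval w = f.eraseLead.eval w + cf * w ^ d := by
      have h := congrArg (eval w) (Polynomial.eraseLead_add_C_mul_X_pow f)
      simp only [eval_add, eval_mul, eval_C, eval_pow, eval_X] at h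
      exact h.symm
    have habs_low : Complex.abs cf * Complex.abs w ^ d - Complex.abs (f.eraseLead.eval w)
        ≤ Complex.abs (f.eval w) := by
      have htri := Complex.abs.add_le (f.eraseLead.eval w + cf * w ^ d) (-(f.eraseLead.eval w))
      have hsimp : f.eraseLead.eval w + cf * w ^ d + -(f.eraseLead.eval w) = cf * w ^ d := by
        ring
      rw [hsimp, map_neg_eq_map] at htri
      rw [hfsplit]
      calc Complex.abs cf * Complex.abs w ^ d - Complex.abs (f.eraseLead.eval w)
          = Complex.abs (cf * w ^ d) - Complex.abs (f.eraseLead.eval w) := by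
            rw [map_mul, map_pow]
        _ ≤ Complex.abs (f.eraseLead.eval w + cf * w ^ d) := by linarith
    have hpowsplit : Complex.abs w ^ d = Complex.abs w * Complex.abs w ^ (d - 1) := by
      rw [← pow_succ']
      congr 1
      omega
    have hkey : (C₁ + Cg) * Complex.abs w ^ (d - 1) ≤ Complex.abs cf * Complex.abs w ^ d := by
      rw [hpowsplit, ← mul_assoc]
      refine mul_le_mul_of_nonneg_right ?_ (pow_nonneg (Complex.abs.nonneg _) _)
      have : (C₁ + Cg + 1) / Complex.abs cf ≤ Complex.abs w := le_trans (le_max_right _ _) hw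
      rw [div_le_iff₀ hcf0] at this
      linarith
    have h1 : Complex.abs (g.eval w) ≤ Cg * Complex.abs w ^ (d - 1) :=
      le_trans hgb (mul_le_mul_of_nonneg_left hg_deg hCg0)
    have h2 : Complex.abs (f.eraseLead.eval w) ≤ C₁ * Complex.abs w ^ (d - 1) :=
      le_trans helb (mul_le_mul_of_nonneg_left hel_deg hC₁0)
    nlinarith [pow_nonneg (Complex.abs.nonneg w) (d - 1)]
  -- bound of g on the compact ball of radius ρ
  obtain ⟨Cρ, hCρ⟩ : ∃ C : ℝ, ∀ x ∈ Metric.closedBall (0 : ℂ) ρ, ‖g.eval x‖ ≤ C := by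
    have hcomp : IsCompact (Metric.closedBall (0 : ℂ) ρ) := isCompact_closedBall _ _
    exact hcomp.exists_bound_of_continuousOn (Continuous.continuousOn (by continuity))
  refine ⟨max 1 (max Cρ ρ), le_max_left _ _, fun w hwf => ?_⟩
  by_cases hcase : Complex.abs w ≤ ρ
  · have : w ∈ Metric.closedBall (0 : ℂ) ρ := by
      simpa [Metric.mem_closedBall, Complex.dist_eq] using hcase
    calc Complex.abs (g.eval w) = ‖g.eval w‖ := (Complex.norm_eq_abs _).symm
      _ ≤ Cρ := hCρ w this
      _ ≤ max 1 (max Cρ ρ) := le_trans (le_max_left _ _) (le_max_right _ _)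
  · push_neg at hcase
    exact le_trans (hdom w hcase.le) hwf


lemma log_int (R₀ : ℝ) (hR : 1 ≤ R₀) (b : ℂ) :
    Integrable (fun z : ℂ => Real.log (Complex.abs (z - b)))
      (volume.restrict (Metric.ball (0 : ℂ) R₀)) ∧
    -Real.pi ≤ ∫ z, Real.log (Complex.abs (z - b))
      ∂(volume.restrict (Metric.ball (0 : ℂ) R₀)) := by
  set m := volume.restrict (Metric.ball (0 : ℂ) R₀) with hm
  haveI : IsFiniteMeasure m := ⟨by
    rw [hm, Measure.restrict_apply_univ]
    exact measure_ball_lt_top⟩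
  set L : ℂ → ℝ := fun z => Real.log (Complex.abs (z - b)) with hL
  set N : ℂ → ℝ := fun z => max (-(L z)) 0 with hN
  have hLmeas : Measurable L :=
    Real.measurable_log.comp (Complex.continuous_abs.measurable.comp (measurable_id.sub_const b))
  have hNmeas : Measurable N := (hLmeas.neg.max measurable_const)
  have hN0 : ∀ z, 0 ≤ N z := fun z => le_max_right _ _
  have hpi : (NNReal.pi : ℝ≥0∞) = ENNReal.ofReal Real.pi := by
    rw [← NNReal.coe_real_pi, ENNReal.ofReal_coe_nnreal]
  have hNlint : ∫⁻ z, ENNReal.ofReal (N z) ∂m ≤ ENNReal.ofReal Real.pi := by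
    rw [lintegral_eq_lintegral_meas_lt m (Filter.Eventually.of_forall hN0) hNmeas.aemeasurable]
    have hbound : ∀ t ∈ Set.Ioi (0 : ℝ),
        m {z | t < N z} ≤ ENNReal.ofReal Real.pi * ENNReal.ofReal (Real.exp (-t)) := by
      intro t ht
      have ht0 : (0 : ℝ) < t := ht
      have hSmeas : MeasurableSet {z : ℂ | t < N z} := measurableSet_lt measurable_const hNmeas
      have hsub : {z : ℂ | t < N z} ⊆ Metric.ball b (Real.exp (-t)) := by
        intro z hz
        have hz' : t < max (-(L z)) 0 := hz
        have hLz : L z < -t := by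
          rcases max_cases (-(L z)) 0 with ⟨heq, -⟩ | ⟨heq, -⟩ <;> rw [heq] at hz' <;> linarith
        have habs_pos : 0 < Complex.abs (z - b) := by
          rcases (Complex.abs.nonneg (z - b)).eq_or_lt with h0 | h0
          · exfalso
            have hLz0 : L z = 0 := by
              show Real.log (Complex.abs (z - b)) = 0
              rw [← h0, Real.log_zero]
            rw [hLz0] at hLz
            linarith
          · exact h0
        have : Complex.abs (z - b) < Real.exp (-t) :=
          (Real.log_lt_iff_lt_exp habs_pos).mp hLz
        simpa [Metric.mem_ball, Complex.dist_eq] using this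
      have h1 : m {z | t < N z} ≤ volume (Metric.ball b (Real.exp (-t))) := by
        rw [hm, Measure.restrict_apply hSmeas]
        exact measure_mono (le_trans Set.inter_subset_left hsub)
      refine le_trans h1 ?_
      rw [Complex.volume_ball, hpi]
      have hle1 : ENNReal.ofReal (Real.exp (-t)) ≤ 1 := by
        rw [ENNReal.ofReal_le_one]
        calc Real.exp (-t) ≤ Real.exp 0 := Real.exp_le_exp.mpr (by linarith)
          _ = 1 := Real.exp_zero
      calc ENNReal.ofReal (Real.exp (-t)) ^ 2 * ENNReal.ofReal Real.pi
          ≤ ENNReal.ofReal (Real.exp (-t)) * ENNReal.ofReal Real.pi := by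
            refine mul_le_mul_left ?_ _
            rw [sq]
            calc ENNReal.ofReal (Real.exp (-t)) * ENNReal.ofReal (Real.exp (-t))
                ≤ 1 * ENNReal.ofReal (Real.exp (-t)) := mul_le_mul_left hle1 _
              _ = ENNReal.ofReal (Real.exp (-t)) := one_mul _
        _ = ENNReal.ofReal Real.pi * ENNReal.ofReal (Real.exp (-t)) := mul_comm _ _
    have hgmeas : Measurable fun t : ℝ => ENNReal.ofReal Real.pi * ENNReal.ofReal (Real.exp (-t)) :=
      (ENNReal.measurable_ofReal.comp (Real.measurable_exp.comp measurable_neg)).const_mul _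
    refine le_trans (setLIntegral_mono hgmeas hbound) ?_
    rw [lintegral_const_mul' _ _ ENNReal.ofReal_ne_top]
    have hint : IntegrableOn (fun t : ℝ => Real.exp (-t)) (Set.Ioi 0) volume := by
      simpa using exp_neg_integrableOn_Ioi 0 one_pos
    have hexp : ∫⁻ t in Set.Ioi (0 : ℝ), ENNReal.ofReal (Real.exp (-t))
        = ENNReal.ofReal (∫ t in Set.Ioi (0 : ℝ), Real.exp (-t)) :=
      (ofReal_integral_eq_lintegral_ofReal hint
        (Filter.Eventually.of_forall fun t => (Real.exp_pos _).le)).symm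
    rw [hexp, integral_exp_neg_Ioi, neg_zero, Real.exp_zero, ENNReal.ofReal_one, mul_one]
  have hNint : Integrable N m :=
    ⟨hNmeas.aestronglyMeasurable,
      (hasFiniteIntegral_iff_ofReal (Filter.Eventually.of_forall hN0)).mpr
        (lt_of_le_of_lt hNlint ENNReal.ofReal_lt_top)⟩
  have hNintegral : ∫ z, N z ∂m ≤ Real.pi := by
    rw [integral_eq_lintegral_of_nonneg_ae (Filter.Eventually.of_forall hN0)
      hNmeas.aestronglyMeasurable]
    exact ENNReal.toReal_le_of_le_ofReal Real.pi_pos.le hNlint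
  set Sb : ℝ := Real.log (R₀ + Complex.abs b + 1) with hSb
  have hSb0 : 0 ≤ Sb := Real.log_nonneg (by
    have := Complex.abs.nonneg b
    linarith)
  have hLbound : ∀ z ∈ Metric.ball (0 : ℂ) R₀, ‖L z‖ ≤ N z + Sb := by
    intro z hz
    have hzR : Complex.abs z < R₀ := by
      simpa [Metric.mem_ball, Complex.dist_eq] using hz
    have htri : Complex.abs (z - b) ≤ Complex.abs z + Complex.abs b := by
      have := Complex.abs.add_le z (-b)
      simpa [sub_eq_add_neg, map_neg_eq_map] using this
    have hup : L z ≤ Sb := by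
      rcases (Complex.abs.nonneg (z - b)).eq_or_lt with h0 | h0
      · have hLz0 : L z = 0 := by
          show Real.log (Complex.abs (z - b)) = 0
          rw [← h0, Real.log_zero]
        rw [hLz0]
        exact hSb0
      · exact Real.log_le_log h0 (by linarith)
    have hlow : -(N z) ≤ L z := neg_le.mpr (le_max_left _ _)
    rw [Real.norm_eq_abs, abs_le]
    constructor
    · have : 0 ≤ N z := hN0 z
      linarith
    · have : 0 ≤ N z := hN0 z
      linarith
  have hLint : Integrable L m := by
    refine Integrable.mono' (hNint.add (integrable_const Sb)) hLmeas.aestronglyMeasurable ?_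
    rw [hm, ae_restrict_iff' Metric.isOpen_ball.measurableSet]
    exact Filter.Eventually.of_forall fun z hz => hLbound z hz
  refine ⟨hLint, ?_⟩
  have h1 : ∀ z, -(N z) ≤ L z := fun z => neg_le.mpr (le_max_left _ _)
  calc -Real.pi ≤ -∫ z, N z ∂m := neg_le_neg hNintegral
    _ = ∫ z, -(N z) ∂m := (integral_neg _).symm
    _ ≤ ∫ z, L z ∂m := integral_mono_ae hNint.neg hLint (Filter.Eventually.of_forall h1)

lemma ms_integral (ν : Measure ℂ) (T : Multiset ℂ) (F : ℂ → ℂ → ℝ)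
    (h : ∀ b ∈ T, Integrable (F b) ν) :
    Integrable (fun z => (T.map (fun b => F b z)).sum) ν ∧
      ∫ z, (T.map (fun b => F b z)).sum ∂ν = (T.map (fun b => ∫ z, F b z ∂ν)).sum := by
  induction T using Multiset.induction_on with
  | empty => simp
  | cons b T ih =>
      have hb : Integrable (F b) ν := h b (Multiset.mem_cons_self _ _)
      have hT : ∀ x ∈ T, Integrable (F x) ν := fun x hx => h x (Multiset.mem_cons_of_mem hx)
      obtain ⟨ih1, ih2⟩ := ih hT
      have hfun : (fun z => ((b ::ₘ T).map (fun b' => F b' z)).sum)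
          = fun z => F b z + (T.map (fun b' => F b' z)).sum := by
        funext z; simp
      constructor
      · rw [hfun]; exact hb.add ih1
      · rw [hfun, integral_add hb ih1, ih2]; simp

end EqmAux

/-- An equilibrium measure of the correspondence `F = f ∘ g⁻¹`: a compactly supported
Borel probability measure `μ` on `ℂ` such that for every compactly supported probability
measure `ν` with bounded density with respect to Lebesgue measure and every bounded
continuous `φ`, `∫ Λⁿφ dν → ∫ φ dμ`. -/
def IsEquilibrium (f g : Polynomial ℂ) (μ : Measure ℂ) : Prop :=
  IsProbabilityMeasure μ ∧ (∃ K : Set ℂ, IsCompact K ∧ μ Kᶜ = 0) ∧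
  ∀ ν : Measure ℂ, IsProbabilityMeasure ν →
    (∃ K : Set ℂ, IsCompact K ∧ ν Kᶜ = 0) →
    (∃ h : ℂ → ℝ≥0∞, (∃ B : ℝ≥0∞, B < ⊤ ∧ ∀ z, h z ≤ B) ∧ ν = volume.withDensity h) →
    ∀ φ : ℂ → ℝ, Continuous φ → (∃ M : ℝ, ∀ z, |φ z| ≤ M) →
      Tendsto (fun n => ∫ z, ((Lam f g)^[n] φ) z ∂ν) atTop (nhds (∫ z, φ z ∂μ))

namespace EqmAux

lemma no_atoms (f g : Polynomial ℂ) (hdeg : g.degree < f.degree) (hg : 1 ≤ g.degree)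
    (μ : Measure ℂ) (hμ : IsEquilibrium f g μ) : ∀ a : ℂ, μ {a} = 0 := by
  intro a
  by_contra hne
  haveI hμprob : IsProbabilityMeasure μ := hμ.1
  -- degree basics
  have hg0 : g ≠ 0 := by
    intro h
    rw [h, Polynomial.degree_zero] at hg
    exact absurd hg (by simp)
  have hf0 : f ≠ 0 := ne_zero_of_degree_gt hdeg
  have hgpos : 0 < g.natDegree := by
    rw [natDegree_pos_iff_degree_pos]
    calc (0 : WithBot ℕ) < 1 := by norm_num
      _ ≤ g.degree := hg
  have hkd : g.natDegree < f.natDegree := natDegree_lt_natDegree hg0 hdeg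
  have hfpos : 0 < f.natDegree := lt_trans hgpos hkd
  have hdR : (0 : ℝ) < (f.natDegree : ℝ) := by exact_mod_cast hfpos
  have hkR : (0 : ℝ) ≤ (g.natDegree : ℝ) := Nat.cast_nonneg _
  have hkdR : (g.natDegree : ℝ) < (f.natDegree : ℝ) := by exact_mod_cast hkd
  -- the radius R₀ and the reference measure ν
  obtain ⟨R₀, hR₀1, hR₀⟩ := exists_R0 hfpos hkd
  have hR₀0 : (0 : ℝ) < R₀ := lt_of_lt_of_le one_pos hR₀1
  set Bs := Metric.ball (0 : ℂ) R₀ with hBs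
  set vb := volume Bs with hvb
  have hvb0 : vb ≠ 0 := (Metric.measure_ball_pos volume 0 hR₀0).ne'
  have hvbtop : vb ≠ ⊤ := measure_ball_lt_top.ne
  set dens : ℂ → ℝ≥0∞ := Bs.indicator (fun _ => vb⁻¹) with hdens
  set ν := volume.withDensity dens with hν
  have hνeq : ν = vb⁻¹ • volume.restrict Bs := by
    rw [hν, hdens, withDensity_indicator Metric.isOpen_ball.measurableSet, withDensity_const]
  have hνprob : IsProbabilityMeasure ν := ⟨by
    rw [hνeq, Measure.smul_apply, Measure.restrict_apply_univ, smul_eq_mul, ← hvb,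
      ENNReal.inv_mul_cancel hvb0 hvbtop]⟩
  have hνcomp : ∃ K : Set ℂ, IsCompact K ∧ ν Kᶜ = 0 := by
    refine ⟨Metric.closedBall 0 R₀, isCompact_closedBall _ _, ?_⟩
    rw [hνeq, Measure.smul_apply, Measure.restrict_apply (measurableSet_closedBall.compl)]
    have hempty : (Metric.closedBall (0 : ℂ) R₀)ᶜ ∩ Bs = ∅ := by
      rw [Set.eq_empty_iff_forall_notMem]
      intro x hx
      obtain ⟨hx1, hx2⟩ := hx
      rw [Set.mem_compl_iff, Metric.mem_closedBall] at hx1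
      rw [hBs, Metric.mem_ball] at hx2
      exact hx1 hx2.le
    rw [hempty, measure_empty, smul_zero]
  have hνdens : ∃ h' : ℂ → ℝ≥0∞, (∃ B : ℝ≥0∞, B < ⊤ ∧ ∀ z, h' z ≤ B)
      ∧ ν = volume.withDensity h' := by
    refine ⟨dens, ⟨vb⁻¹, ENNReal.inv_lt_top.mpr (pos_iff_ne_zero.mpr hvb0), fun z => ?_⟩, hν⟩
    rw [hdens]
    by_cases hz : z ∈ Bs
    · rw [Set.indicator_of_mem hz]
    · rw [Set.indicator_of_notMem hz]
      exact zero_le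
  -- log integrals against ν
  set C₀ : ℝ := (vb⁻¹).toReal * Real.pi with hC₀
  have hC₀0 : 0 ≤ C₀ := mul_nonneg ENNReal.toReal_nonneg Real.pi_pos.le
  have hlogint : ∀ b : ℂ, Integrable (fun z => Real.log (Complex.abs (z - b))) ν ∧
      -C₀ ≤ ∫ z, Real.log (Complex.abs (z - b)) ∂ν := by
    intro b
    obtain ⟨h1, h2⟩ := log_int R₀ hR₀1 b
    constructor
    · rw [hνeq]
      exact h1.smul_measure (ENNReal.inv_ne_top.mpr hvb0)
    · rw [hνeq, integral_smul_measure, smul_eq_mul]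
      calc -C₀ = (vb⁻¹).toReal * (-Real.pi) := by rw [hC₀]; ring
        _ ≤ (vb⁻¹).toReal * ∫ z, Real.log (Complex.abs (z - b))
              ∂(volume.restrict Bs) := mul_le_mul_of_nonneg_left h2 ENNReal.toReal_nonneg
  -- constants
  set γ : ℝ := (f.natDegree : ℝ) * Real.log (Complex.abs g.leadingCoeff)
      - (g.natDegree : ℝ) * Real.log (Complex.abs f.leadingCoeff) with hγ
  set A : ℝ := |γ| / ((f.natDegree : ℝ) * (1 - (g.natDegree : ℝ) / (f.natDegree : ℝ))) with hA
  have hA0 : 0 ≤ A := by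
    apply div_nonneg (abs_nonneg _)
    apply mul_nonneg hdR.le
    have : (g.natDegree : ℝ) / (f.natDegree : ℝ) < 1 := (div_lt_one hdR).mpr hkdR
    linarith
  set c : ℝ := (μ {a}).toReal with hc
  have hc0 : 0 < c := ENNReal.toReal_pos hne (measure_ne_top μ _)
  set S : ℝ := Real.log (R₀ + Complex.abs a + 1) with hS
  have hS0 : 0 ≤ S := Real.log_nonneg (by
    have := Complex.abs.nonneg a
    linarith)
  set K : ℝ := A + C₀ with hK
  have hK0 : 0 ≤ K := add_nonneg hA0 hC₀0
  set M : ℝ := (S + K) / c + 2 with hM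
  have hM2 : 2 ≤ M := by
    rw [hM]
    have : 0 ≤ (S + K) / c := div_nonneg (by linarith) hc0.le
    linarith
  have hM0 : 0 ≤ M := by linarith
  -- test functions
  set ψ : ℂ → ℝ := fun x => Real.log (Complex.abs (x - a) + Real.exp (-M)) with hψ
  set φ : ℂ → ℝ := fun x => min (ψ x) S with hφ
  set ρ : ℂ → ℝ := fun x => max (ψ x - S) 0 with hρ
  have hargpos : ∀ x : ℂ, 0 < Complex.abs (x - a) + Real.exp (-M) :=
    fun x => add_pos_of_nonneg_of_pos (Complex.abs.nonneg _) (Real.exp_pos _)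
  have hψcont : Continuous ψ :=
    Continuous.log ((Complex.continuous_abs.comp (continuous_id.sub continuous_const)).add
      continuous_const) (fun x => (hargpos x).ne')
  have hφcont : Continuous φ := hψcont.min continuous_const
  have hψlb : ∀ x : ℂ, -M ≤ ψ x := by
    intro x
    calc -M = Real.log (Real.exp (-M)) := (Real.log_exp _).symm
      _ ≤ ψ x := Real.log_le_log (Real.exp_pos _)
          (le_add_of_nonneg_left (Complex.abs.nonneg _))
  have hφbdd : ∃ Mb : ℝ, ∀ z, |φ z| ≤ Mb := by
    refine ⟨M + S, fun z => abs_le.mpr ⟨?_, ?_⟩⟩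
    · have h1 : -M ≤ min (ψ z) S := le_min (hψlb z) (by linarith)
      have : φ z = min (ψ z) S := rfl
      linarith [h1]
    · have h2 : min (ψ z) S ≤ S := min_le_right _ _
      have : φ z = min (ψ z) S := rfl
      linarith [h2]
  have htend := hμ.2.2 ν hνprob hνcomp hνdens φ hφcont hφbdd
  -- structural facts about the test functions
  have hφψρ : φ = ψ - ρ := by
    funext x
    show min (ψ x) S = ψ x - max (ψ x - S) 0
    rcases le_total (ψ x) S with hcs | hcs
    · rw [min_eq_left hcs, max_eq_right (by linarith), sub_zero]
    · rw [min_eq_right hcs, max_eq_left (by linarith)]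
      ring
  have hρ0 : ∀ x : ℂ, Complex.abs x ≤ R₀ → ρ x = 0 := by
    intro x hx
    have htri : Complex.abs (x - a) ≤ Complex.abs x + Complex.abs a := by
      have := Complex.abs.add_le x (-a)
      simpa [sub_eq_add_neg, map_neg_eq_map] using this
    have hexp1 : Real.exp (-M) ≤ 1 := by
      calc Real.exp (-M) ≤ Real.exp 0 := Real.exp_le_exp.mpr (by linarith)
        _ = 1 := Real.exp_zero
    have hψS : ψ x ≤ S :=
      Real.log_le_log (hargpos x) (by linarith)
    show max (ψ x - S) 0 = 0
    exact max_eq_right (by linarith)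
  have hψbase : ∀ x : ℂ, x ≠ a → Real.log (Complex.abs (x - a)) ≤ ψ x := by
    intro x hx
    have hpos : 0 < Complex.abs (x - a) :=
      Complex.abs.pos (sub_ne_zero.mpr hx)
    exact Real.log_le_log hpos (le_add_of_nonneg_right (Real.exp_pos _).le)
  -- uniform lower bound on the integrals
  have hlow : ∀ n : ℕ, -K ≤ ∫ z, ((Lam f g)^[n] φ) z ∂ν := by
    intro n
    by_cases hInt : Integrable ((Lam f g)^[n] φ) ν
    · obtain ⟨hms_int, hms_eq⟩ := ms_integral ν (Bfam g f a n)
        (fun b z => Real.log (Complex.abs (z - b))) (fun b _ => (hlogint b).1)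
      have h1 : Integrable (fun z => ((f.natDegree : ℝ) ^ n)⁻¹
          * ((Bfam g f a n).map (fun b => Real.log (Complex.abs (z - b)))).sum) ν :=
        hms_int.const_mul _
      set G : ℂ → ℝ := fun z => cseq γ f.natDegree g.natDegree n
          + ((f.natDegree : ℝ) ^ n)⁻¹
            * ((Bfam g f a n).map (fun b => Real.log (Complex.abs (z - b)))).sum with hG
      have hGint : Integrable G ν := by
        have := (integrable_const (cseq γ f.natDegree g.natDegree n) (μ := ν)).add h1
        exact this
      have hpt : ∀ z : ℂ, z ∈ Bs → z ∉ Bfam g f a n → G z ≤ (Lam f g)^[n] φ z := by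
        intro z hzb hzB
        have hzR : Complex.abs z ≤ R₀ := by
          rw [hBs, Metric.mem_ball] at hzb
          rw [Complex.dist_eq, sub_zero] at hzb
          exact hzb.le
        have hρz : (Lam f g)^[n] ρ z = 0 := Lam_iter_rho_zero f g hfpos R₀ hR₀ ρ hρ0 n z hzR
        have hsplit : (Lam f g)^[n] φ z = (Lam f g)^[n] ψ z - (Lam f g)^[n] ρ z := by
          rw [hφψρ, Lam_iter_sub]
          rfl
        rw [hsplit, hρz, sub_zero]
        exact main_claim hfpos hgpos hf0 hg0 a ψ hψbase n z hzB
      have hnull : ν (Bsᶜ ∪ {z : ℂ | z ∈ Bfam g f a n}) = 0 := by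
        apply measure_union_null
        · rw [hνeq, Measure.smul_apply,
            Measure.restrict_apply Metric.isOpen_ball.measurableSet.compl,
            Set.compl_inter_self, measure_empty, smul_zero]
        · have hfin : ({z : ℂ | z ∈ Bfam g f a n}).Finite := Multiset.finite_toSet _
          rw [hν]
          exact withDensity_absolutelyContinuous volume dens (hfin.measure_zero volume)
      have hae : G ≤ᵐ[ν] (Lam f g)^[n] φ := by
        have hsubset : {z : ℂ | ¬ G z ≤ (Lam f g)^[n] φ z}
            ⊆ Bsᶜ ∪ {z : ℂ | z ∈ Bfam g f a n} := by
          intro z hz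
          by_contra hcon
          rw [Set.mem_union, not_or] at hcon
          obtain ⟨hcon1, hcon2⟩ := hcon
          rw [Set.mem_compl_iff, not_not] at hcon1
          exact hz (hpt z hcon1 hcon2)
        exact ae_iff.mpr (measure_mono_null hsubset hnull)
      have hGle := integral_mono_ae hGint hInt hae
      have hGeq : ∫ z, G z ∂ν = cseq γ f.natDegree g.natDegree n
          + ((f.natDegree : ℝ) ^ n)⁻¹ * ((Bfam g f a n).map
              (fun b => ∫ z, Real.log (Complex.abs (z - b)) ∂ν)).sum := by
        rw [hG]
        rw [integral_add (integrable_const _) h1, integral_const, integral_const_mul, hms_eq]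
        haveI := hνprob
        simp [measure_univ]
      have hsum_lb : ((g.natDegree ^ n : ℕ) : ℝ) * (-C₀)
          ≤ ((Bfam g f a n).map (fun b => ∫ z, Real.log (Complex.abs (z - b)) ∂ν)).sum := by
        have := Multiset.card_nsmul_le_sum (s := (Bfam g f a n).map
          (fun b => ∫ z, Real.log (Complex.abs (z - b)) ∂ν)) (a := -C₀) ?_
        · rw [Multiset.card_map, card_Bfam hgpos, nsmul_eq_mul] at this
          exact this
        · intro x hx
          rcases Multiset.mem_map.mp hx with ⟨b, hb, rfl⟩
          exact (hlogint b).2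
      have hratio : ((f.natDegree : ℝ) ^ n)⁻¹ * ((g.natDegree ^ n : ℕ) : ℝ) ≤ 1 := by
        rw [Nat.cast_pow]
        rw [inv_mul_le_iff₀ (pow_pos hdR n), mul_one]
        exact pow_le_pow_left₀ hkR hkdR.le n
      have hcseq := cseq_ge γ hfpos hkd n
      have hfinal : -K ≤ ∫ z, G z ∂ν := by
        rw [hGeq, hK]
        have h2 : ((f.natDegree : ℝ) ^ n)⁻¹ * (((g.natDegree ^ n : ℕ) : ℝ) * (-C₀))
            ≤ ((f.natDegree : ℝ) ^ n)⁻¹ * ((Bfam g f a n).map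
              (fun b => ∫ z, Real.log (Complex.abs (z - b)) ∂ν)).sum :=
          mul_le_mul_of_nonneg_left hsum_lb (inv_nonneg.mpr (pow_nonneg hdR.le n))
        have h3 : -C₀ ≤ ((f.natDegree : ℝ) ^ n)⁻¹ * (((g.natDegree ^ n : ℕ) : ℝ) * (-C₀)) := by
          have hnn : 0 ≤ ((f.natDegree : ℝ) ^ n)⁻¹ * ((g.natDegree ^ n : ℕ) : ℝ) :=
            mul_nonneg (inv_nonneg.mpr (pow_nonneg hdR.le n)) (Nat.cast_nonneg _)
          nlinarith
        have h4 : -A ≤ cseq γ f.natDegree g.natDegree n := hcseq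
        nlinarith
      linarith [hGle, hfinal]
    · rw [integral_undef hInt]
      linarith
  -- conclude a lower bound on ∫ φ dμ
  have hliminf : -K ≤ ∫ z, φ z ∂μ := ge_of_tendsto' htend hlow
  -- upper bound on ∫ φ dμ
  set cb := Metric.closedBall a (Real.exp (-M)) with hcb
  set coef : ℝ := S + M - Real.log 2 with hcoef
  have hlog2 : Real.log 2 ≤ 1 := by
    have := Real.log_le_sub_one_of_pos (by norm_num : (0:ℝ) < 2)
    linarith
  have hcoef0 : 0 ≤ coef := by rw [hcoef]; linarith
  have hptu : ∀ z : ℂ, φ z ≤ S - coef * (cb.indicator (fun _ => (1 : ℝ)) z) := by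
    intro z
    by_cases hz : z ∈ cb
    · rw [Set.indicator_of_mem hz, mul_one]
      have hzd : Complex.abs (z - a) ≤ Real.exp (-M) := by
        rw [hcb, Metric.mem_closedBall, Complex.dist_eq] at hz
        exact hz
      have hψz : ψ z ≤ Real.log 2 - M := by
        have harg : Complex.abs (z - a) + Real.exp (-M) ≤ 2 * Real.exp (-M) := by linarith
        calc ψ z ≤ Real.log (2 * Real.exp (-M)) := Real.log_le_log (hargpos z) harg
          _ = Real.log 2 + Real.log (Real.exp (-M)) :=
            Real.log_mul (by norm_num) (Real.exp_ne_zero _)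
          _ = Real.log 2 - M := by rw [Real.log_exp]; ring
      have : φ z ≤ ψ z := min_le_left _ _
      rw [hcoef]
      linarith
    · rw [Set.indicator_of_notMem hz, mul_zero, sub_zero]
      exact min_le_right _ _
  have hφint : Integrable φ μ := by
    obtain ⟨Mb, hMb⟩ := hφbdd
    refine Integrable.mono' (integrable_const Mb) hφcont.aestronglyMeasurable ?_
    exact Filter.Eventually.of_forall fun z => by
      rw [Real.norm_eq_abs]; exact hMb z
  have hindint : Integrable (fun z => S - coef * (cb.indicator (fun _ => (1 : ℝ)) z)) μ := by
    have h1 : Integrable (cb.indicator (fun _ => (1 : ℝ))) μ :=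
      (integrable_const (1 : ℝ)).indicator measurableSet_closedBall
    have h2 : Integrable (fun z => coef * (cb.indicator (fun _ => (1 : ℝ)) z)) μ :=
      h1.const_mul _
    exact (integrable_const S).sub h2
  have hμint := integral_mono hφint hindint hptu
  have hRHS : ∫ z, (S - coef * (cb.indicator (fun _ => (1 : ℝ)) z)) ∂μ
      = S - coef * (μ cb).toReal := by
    rw [integral_sub (integrable_const S)
      (((integrable_const (1 : ℝ)).indicator measurableSet_closedBall).const_mul coef)]
    rw [integral_const, integral_const_mul, integral_indicator_const _ measurableSet_closedBall]
    simp [measure_univ, measureReal_def, hcb]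
  have hμcb : c ≤ (μ cb).toReal := by
    rw [hc]
    apply ENNReal.toReal_le_toReal (measure_ne_top μ _) (measure_ne_top μ _) |>.mpr
    apply measure_mono
    rw [Set.singleton_subset_iff, hcb]
    exact Metric.mem_closedBall_self (Real.exp_pos _).le
  have hup : ∫ z, φ z ∂μ ≤ S - coef * c := by
    have : coef * c ≤ coef * (μ cb).toReal := mul_le_mul_of_nonneg_left hμcb hcoef0
    rw [hRHS] at hμint
    linarith
  -- contradiction
  have hcoefc : S + K + c ≤ coef * c := by
    have hMc : ((S + K) / c) * c = S + K := div_mul_cancel₀ _ hc0.ne'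
    have hcoefge : (S + K) / c + 1 ≤ coef := by
      rw [hcoef, hM]
      linarith
    calc S + K + c = ((S + K) / c) * c + 1 * c := by rw [hMc]; ring
      _ ≤ coef * c := by
        have := mul_le_mul_of_nonneg_right hcoefge hc0.le
        calc ((S + K) / c) * c + 1 * c = ((S + K) / c + 1) * c := by ring
          _ ≤ coef * c := this
  linarith [hliminf, hup, hcoefc, hc0]

end EqmAux

/-- The (topological) support of a measure on `ℂ`: the set of points all of whose
neighborhoods have positive measure. -/
def measSupport (ν : Measure ℂ) : Set ℂ :=
  {z : ℂ | ∀ r : ℝ, 0 < r → 0 < ν (Metric.ball z r)}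

theorem equilibrium_measure_no_atoms_support_perfect
    (f g : Polynomial ℂ) (hdeg : g.degree < f.degree) (hg : 1 ≤ g.degree)
    (μ : Measure ℂ) (hμ : IsEquilibrium f g μ) :
    (∀ a : ℂ, μ {a} = 0) ∧
    (∀ z ∈ measSupport μ, ∀ r : ℝ, 0 < r →
      ∃ w ∈ measSupport μ, w ≠ z ∧ dist w z < r) := by
  have part1 : ∀ a : ℂ, μ {a} = 0 := EqmAux.no_atoms f g hdeg hg μ hμ
  refine ⟨part1, ?_⟩
  intro z hz r hr
  by_contra hcon
  push_neg at hcon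
  -- every point of the punctured ball has a null neighborhood
  have hU : ∀ y ∈ Metric.ball z r \ {z}, ∃ ρ : ℝ, 0 < ρ ∧ μ (Metric.ball y ρ) = 0 := by
    intro y hy
    obtain ⟨hyball, hyne⟩ := hy
    have hyne' : y ≠ z := by simpa using hyne
    have hyd : dist y z < r := by simpa [Metric.mem_ball] using hyball
    have hynot : y ∉ measSupport μ := by
      intro hmem
      exact absurd hyd (not_lt.mpr (by simpa using (hcon y hmem hyne')))
    rw [measSupport, Set.mem_setOf_eq] at hynot
    push_neg at hynot
    obtain ⟨ρ, hρ0, hρn⟩ := hynot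
    exact ⟨ρ, hρ0, le_zero_iff.mp hρn⟩
  classical
  set U := Metric.ball z r \ {z} with hUdef
  choose! ρfun hρpos hρnull using hU
  have hcover : U ⊆ ⋃ y : U, Metric.ball (y : ℂ) (ρfun y) := by
    intro x hx
    exact Set.mem_iUnion.mpr ⟨⟨x, hx⟩, Metric.mem_ball_self (hρpos x hx)⟩
  obtain ⟨T, hTc, hTeq⟩ := TopologicalSpace.isOpen_iUnion_countable
    (fun y : U => Metric.ball (y : ℂ) (ρfun y)) (fun y => Metric.isOpen_ball)
  have hμU : μ U = 0 := by
    rw [← hTeq] at hcover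
    refine measure_mono_null hcover ?_
    haveI := hTc.to_subtype
    rw [Set.biUnion_eq_iUnion]
    exact measure_iUnion_null fun i => hρnull _ (i : U).2
  have hball : μ (Metric.ball z r) = 0 := by
    have hsplit : Metric.ball z r ⊆ U ∪ {z} := by
      intro x hx
      by_cases hxz : x = z
      · right; simp [hxz]
      · left; exact ⟨hx, by simpa using hxz⟩
    have := measure_mono (μ := μ) hsplit
    have h2 : μ (U ∪ {z}) ≤ μ U + μ {z} := measure_union_le (μ := μ) U {z}
    rw [hμU, part1 z, add_zero] at h2
    exact le_antisymm (le_trans this h2) zero_le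
  have := hz r hr
  rw [hball] at this
  exact lt_irrefl 0 this
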